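/- Let F : (0,∞) → ℝ be measurable with σ_F(x) := sup_{y ≥ x} |F(y)| finite for every x > 0 and integrable on (0,∞), and let x₀ ≥ 0 satisfy σ_{1F}(2x₀) < 1, where σ_{1F}(x) := ∫_x^∞ σ_F(y) dy. Then for every x ≥ x₀ there exists a unique function A_x ∈ L¹(x,∞) such that A_x(y) + ∫_x^∞ A_x(t) F(t+y) dt = −F(x+y) for almost every y ≥ x. -/

import Mathlib

open MeasureTheory Set Filter
open scoped ENNReal NNReal

/-- `σ_F(x) := sup_{y ≥ x} |F(y)|`. -/
noncomputable def sigmaF (F : ℝ → ℝ) (x : ℝ) : ℝ :=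
  sSup ((fun y => |F y|) '' Set.Ici x)

section Aux

variable {F : ℝ → ℝ}

lemma sigmaF_ge (hFbdd : ∀ x > (0 : ℝ), BddAbove ((fun y => |F y|) '' Set.Ici x))
    {a y : ℝ} (ha : 0 < a) (hy : a ≤ y) : |F y| ≤ sigmaF F a :=
  le_csSup (hFbdd a ha) ⟨y, hy, rfl⟩

lemma sigmaF_nonneg (hFbdd : ∀ x > (0 : ℝ), BddAbove ((fun y => |F y|) '' Set.Ici x))
    {a : ℝ} (ha : 0 < a) : 0 ≤ sigmaF F a :=
  (abs_nonneg _).trans (sigmaF_ge hFbdd ha le_rfl)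

/-- Translation of set integrals on `Ioi`. -/
lemma integral_Ioi_comp_add (g : ℝ → ℝ) (c b : ℝ) :
    ∫ y in Set.Ioi b, g (c + y) = ∫ y in Set.Ioi (c + b), g y := by
  have h1 : MeasurePreserving (fun y : ℝ => c + y) volume volume :=
    measurePreserving_add_left volume c
  have h2 : MeasurableEmbedding (fun y : ℝ => c + y) :=
    (MeasurableEquiv.addLeft c).measurableEmbedding
  have h3 := h1.setIntegral_preimage_emb h2 g (Set.Ioi (c + b))
  rw [← h3]
  congr 1
  ext y; simp [Set.mem_Ioi]

lemma integrableOn_Ioi_comp_add {g : ℝ → ℝ} {c b : ℝ}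
    (hg : IntegrableOn g (Set.Ioi (c + b))) :
    IntegrableOn (fun y => g (c + y)) (Set.Ioi b) := by
  have h1 : MeasurePreserving (fun y : ℝ => c + y) volume volume :=
    measurePreserving_add_left volume c
  have h2 : MeasurableEmbedding (fun y : ℝ => c + y) :=
    (MeasurableEquiv.addLeft c).measurableEmbedding
  have hpre : (fun y : ℝ => c + y) ⁻¹' Set.Ioi (c + b) = Set.Ioi b := by
    ext y; simp [Set.mem_Ioi]
  have h3 := h1.restrict_preimage_emb h2 (Set.Ioi (c + b))
  have h4 := (h3.integrable_comp_emb h2 (g := g)).2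
  rw [hpre] at h4
  exact h4 hg

end Aux

/-- if `σ_F` is finite on `(0,∞)`, integrable there, and `σ_{1F}(2x₀) < 1`
for some `x₀ ≥ 0`, then for every `x ≥ x₀` the Marchenko equation
`A(y) + ∫_x^∞ A(t) F(t+y) dt = −F(x+y)` (a.e. `y ≥ x`) has a unique solution `A ∈ L¹(x,∞)`
(unique up to a.e. equality). -/
theorem marchenko_unique_solution
    (F : ℝ → ℝ) (hFmeas : Measurable F)
    (hFbdd : ∀ x > (0 : ℝ), BddAbove ((fun y => |F y|) '' Set.Ici x))
    (hσint : IntegrableOn (sigmaF F) (Set.Ioi 0))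
    (x₀ : ℝ) (hx₀ : 0 ≤ x₀)
    (hsmall : (∫ y in Set.Ioi (2 * x₀), sigmaF F y) < 1) :
    ∀ x ≥ x₀, ∃ A : ℝ → ℝ, IntegrableOn A (Set.Ioi x) ∧
      (∀ᵐ y ∂(volume.restrict (Set.Ioi x)),
        A y + ∫ t in Set.Ioi x, A t * F (t + y) = -F (x + y)) ∧
      ∀ B : ℝ → ℝ, IntegrableOn B (Set.Ioi x) →
        (∀ᵐ y ∂(volume.restrict (Set.Ioi x)),
          B y + ∫ t in Set.Ioi x, B t * F (t + y) = -F (x + y)) →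
        B =ᵐ[volume.restrict (Set.Ioi x)] A := by
  intro x hxx
  have hx0 : (0:ℝ) ≤ x := hx₀.trans hxx
  set μ : Measure ℝ := volume.restrict (Set.Ioi x) with hμ
  set k : ℝ := ∫ y in Set.Ioi (2 * x₀), sigmaF F y with hk
  have hσint' : ∀ a : ℝ, 0 ≤ a → IntegrableOn (sigmaF F) (Set.Ioi a) :=
    fun a ha => hσint.mono_set (Set.Ioi_subset_Ioi ha)
  have hk0 : 0 ≤ k := by
    refine setIntegral_nonneg measurableSet_Ioi fun y hy => ?_
    exact sigmaF_nonneg hFbdd (lt_of_le_of_lt (by linarith) hy)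
  have hk1 : k < 1 := hsmall
  -- tail bound
  have tail_le : ∀ a : ℝ, 2 * x₀ ≤ a → (∫ y in Set.Ioi a, sigmaF F y) ≤ k := by
    intro a ha
    refine setIntegral_mono_set (hσint' _ (by linarith)) ?_
      ((Set.Ioi_subset_Ioi ha).eventuallyLE)
    filter_upwards [ae_restrict_mem measurableSet_Ioi] with y hy
    exact sigmaF_nonneg hFbdd (lt_of_le_of_lt (by linarith) hy)
  -- shifted sigma
  have sig_shift_int : ∀ t : ℝ, 0 ≤ t →
      IntegrableOn (fun y => sigmaF F (t + y)) (Set.Ioi x) := by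
    intro t ht
    exact integrableOn_Ioi_comp_add (hσint' (t + x) (by linarith))
  have sig_shift_le : ∀ t : ℝ, x ≤ t →
      (∫ y in Set.Ioi x, sigmaF F (t + y)) ≤ k := by
    intro t ht
    rw [integral_Ioi_comp_add]
    exact tail_le _ (by linarith)
  -- pointwise bounds
  have F_le_sig : ∀ t y : ℝ, x ≤ t → x < y → |F (t + y)| ≤ sigmaF F (t + y) := by
    intro t y ht hy
    exact sigmaF_ge hFbdd (by linarith) le_rfl
  have F_le_sigx : ∀ t y : ℝ, x ≤ t → x < y → |F (t + y)| ≤ sigmaF F (x + y) := by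
    intro t y ht hy
    exact sigmaF_ge hFbdd (by linarith) (by linarith)
  -- integrability of the forcing term
  have Fx_int : Integrable (fun y => F (x + y)) μ := by
    refine Integrable.mono' (sig_shift_int x hx0)
      ((hFmeas.comp (measurable_const_add x)).aestronglyMeasurable) ?_
    filter_upwards [ae_restrict_mem measurableSet_Ioi] with y hy
    exact F_le_sig x y le_rfl hy
  -- product integrability of the kernel against an integrable h
  have prod_int : ∀ h : ℝ → ℝ, Integrable h μ →
      Integrable (fun z : ℝ × ℝ => h z.1 * F (z.1 + z.2)) (μ.prod μ) := by
    intro h hh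
    have hmeas : AEStronglyMeasurable (fun z : ℝ × ℝ => h z.1 * F (z.1 + z.2)) (μ.prod μ) :=
      (hh.aemeasurable.comp_fst.aestronglyMeasurable).mul
        ((hFmeas.comp measurable_add).aestronglyMeasurable)
    have hdom : Integrable (fun z : ℝ × ℝ => |h z.1| * sigmaF F (x + z.2)) (μ.prod μ) :=
      hh.abs.mul_prod (sig_shift_int x hx0)
    refine hdom.mono' hmeas ?_
    have hset : μ.prod μ = (volume.prod volume).restrict (Set.Ioi x ×ˢ Set.Ioi x) := by
      rw [hμ, Measure.prod_restrict]
    rw [hset]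
    filter_upwards [ae_restrict_mem (measurableSet_Ioi.prod measurableSet_Ioi)] with z hz
    obtain ⟨hz1, hz2⟩ := hz
    rw [Real.norm_eq_abs, abs_mul]
    exact mul_le_mul_of_nonneg_left (F_le_sigx z.1 z.2 (le_of_lt hz1) hz2) (abs_nonneg _)
  have K_int : ∀ h : ℝ → ℝ, Integrable h μ →
      Integrable (fun y => ∫ t in Set.Ioi x, h t * F (t + y)) μ := by
    intro h hh
    exact (prod_int h hh).integral_prod_right
  -- the key norm bound
  have K_norm : ∀ h : ℝ → ℝ, Integrable h μ →
      (∫ y in Set.Ioi x, |∫ t in Set.Ioi x, h t * F (t + y)|) ≤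
        k * ∫ t in Set.Ioi x, |h t| := by
    intro h hh
    have hprod := prod_int h hh
    have hnorm : Integrable (fun z : ℝ × ℝ => |h z.1 * F (z.1 + z.2)|) (μ.prod μ) := hprod.abs
    have step1 : (∫ y in Set.Ioi x, |∫ t in Set.Ioi x, h t * F (t + y)|) ≤
        ∫ y in Set.Ioi x, ∫ t in Set.Ioi x, |h t * F (t + y)| := by
      refine integral_mono (K_int h hh).abs hnorm.integral_prod_right fun y => ?_
      simpa only [Real.norm_eq_abs] using norm_integral_le_integral_norm (fun t => h t * F (t + y)) (μ := μ)
    have step2 : (∫ y in Set.Ioi x, ∫ t in Set.Ioi x, |h t * F (t + y)|) =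
        ∫ t in Set.Ioi x, ∫ y in Set.Ioi x, |h t * F (t + y)| := by
      exact (integral_integral_swap (f := fun t y => |h t * F (t + y)|) hnorm).symm
    have inner_le : ∀ t ∈ Set.Ioi x, (∫ y in Set.Ioi x, |h t * F (t + y)|) ≤ |h t| * k := by
      intro t ht
      have ht' : x < t := ht
      simp only [abs_mul]
      rw [integral_const_mul]
      refine mul_le_mul_of_nonneg_left ?_ (abs_nonneg _)
      have hFint : Integrable (fun y => |F (t + y)|) μ := by
        refine Integrable.mono' (sig_shift_int t (by linarith))
          ((hFmeas.comp (measurable_const_add t)).abs.aestronglyMeasurable) ?_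
        filter_upwards [ae_restrict_mem measurableSet_Ioi] with y hy
        simpa [abs_abs] using F_le_sig t y ht'.le hy
      calc (∫ y in Set.Ioi x, |F (t + y)|) ≤ ∫ y in Set.Ioi x, sigmaF F (t + y) := by
            refine integral_mono_ae hFint (sig_shift_int t (by linarith)) ?_
            filter_upwards [ae_restrict_mem measurableSet_Ioi] with y hy
            exact F_le_sig t y ht'.le hy
        _ ≤ k := sig_shift_le t ht'.le
    have step3 : (∫ t in Set.Ioi x, ∫ y in Set.Ioi x, |h t * F (t + y)|) ≤
        ∫ t in Set.Ioi x, |h t| * k := by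
      refine integral_mono_ae hnorm.integral_prod_left (hh.abs.mul_const k) ?_
      filter_upwards [ae_restrict_mem measurableSet_Ioi] with t ht
      exact inner_le t ht
    have step4 : (∫ t in Set.Ioi x, |h t| * k) = k * ∫ t in Set.Ioi x, |h t| := by
      rw [integral_mul_const]; ring
    calc (∫ y in Set.Ioi x, |∫ t in Set.Ioi x, h t * F (t + y)|)
        ≤ ∫ y in Set.Ioi x, ∫ t in Set.Ioi x, |h t * F (t + y)| := step1
      _ = ∫ t in Set.Ioi x, ∫ y in Set.Ioi x, |h t * F (t + y)| := step2
      _ ≤ ∫ t in Set.Ioi x, |h t| * k := step3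
      _ = k * ∫ t in Set.Ioi x, |h t| := step4
  -- set up the contraction on L¹
  have hint : ∀ f : Lp ℝ 1 μ, Integrable (f : ℝ → ℝ) μ := fun f => L1.integrable_coeFn f
  have gint : ∀ f : Lp ℝ 1 μ,
      Integrable (fun y => -F (x + y) - ∫ t in Set.Ioi x, (f : ℝ → ℝ) t * F (t + y)) μ :=
    fun f => (Fx_int.neg).sub (K_int _ (hint f))
  let Φ : Lp ℝ 1 μ → Lp ℝ 1 μ := fun f => Integrable.toL1 _ (gint f)
  have dist_eq : ∀ f g : Lp ℝ 1 μ,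
      dist f g = ∫ a in Set.Ioi x, |(f : ℝ → ℝ) a - (g : ℝ → ℝ) a| := by
    intro f g
    rw [dist_eq_norm, L1.norm_eq_integral_norm]
    refine integral_congr_ae ?_
    filter_upwards [Lp.coeFn_sub f g] with a ha
    rw [ha]; simp [Real.norm_eq_abs]
  have contract : ∀ f g : Lp ℝ 1 μ, dist (Φ f) (Φ g) ≤ k * dist f g := by
    intro f g
    set d : ℝ → ℝ := fun t => (f : ℝ → ℝ) t - (g : ℝ → ℝ) t with hd
    have hdint : Integrable d μ := (hint f).sub (hint g)
    have key : (fun a => ((Φ f : Lp ℝ 1 μ) : ℝ → ℝ) a - ((Φ g : Lp ℝ 1 μ) : ℝ → ℝ) a) =ᵐ[μ]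
        (fun y => -∫ t in Set.Ioi x, d t * F (t + y)) := by
      filter_upwards [Integrable.coeFn_toL1 (gint f), Integrable.coeFn_toL1 (gint g),
        (prod_int _ (hint f)).prod_left_ae, (prod_int _ (hint g)).prod_left_ae]
        with y h1 h2 h3 h4
      rw [h1, h2]
      have hsub : (∫ t in Set.Ioi x, d t * F (t + y)) =
          (∫ t in Set.Ioi x, (f : ℝ → ℝ) t * F (t + y)) -
            ∫ t in Set.Ioi x, (g : ℝ → ℝ) t * F (t + y) := by
        rw [← integral_sub h3 h4]
        refine integral_congr_ae (Eventually.of_forall fun t => ?_)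
        simp only [hd]; ring
      rw [hsub]; ring
    calc dist (Φ f) (Φ g)
        = ∫ a in Set.Ioi x, |((Φ f : Lp ℝ 1 μ) : ℝ → ℝ) a - ((Φ g : Lp ℝ 1 μ) : ℝ → ℝ) a| :=
          dist_eq _ _
      _ = ∫ y in Set.Ioi x, |∫ t in Set.Ioi x, d t * F (t + y)| := by
          refine integral_congr_ae ?_
          filter_upwards [key] with y hy
          rw [hy, abs_neg]
      _ ≤ k * ∫ t in Set.Ioi x, |d t| := K_norm d hdint
      _ = k * dist f g := by rw [dist_eq f g]
  have hΦlip : LipschitzWith ⟨k, hk0⟩ Φ :=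
    LipschitzWith.of_dist_le_mul fun f g => by
      exact contract f g
  have hΦ : ContractingWith ⟨k, hk0⟩ Φ := ⟨by exact_mod_cast hk1, hΦlip⟩
  haveI : Nonempty (Lp ℝ 1 μ) := ⟨0⟩
  set A₁ : Lp ℝ 1 μ := ContractingWith.fixedPoint Φ hΦ with hA₁
  have hfix : Φ A₁ = A₁ := hΦ.fixedPoint_isFixedPt
  have hAeq : ∀ᵐ y ∂μ, ((A₁ : Lp ℝ 1 μ) : ℝ → ℝ) y
      + ∫ t in Set.Ioi x, ((A₁ : Lp ℝ 1 μ) : ℝ → ℝ) t * F (t + y) = -F (x + y) := by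
    have h1 : ((Φ A₁ : Lp ℝ 1 μ) : ℝ → ℝ) =ᵐ[μ]
        fun y => -F (x + y) - ∫ t in Set.Ioi x, ((A₁ : Lp ℝ 1 μ) : ℝ → ℝ) t * F (t + y) :=
      Integrable.coeFn_toL1 _
    rw [hfix] at h1
    filter_upwards [h1] with y hy
    rw [hy]; ring
  refine ⟨((A₁ : Lp ℝ 1 μ) : ℝ → ℝ), L1.integrable_coeFn A₁, hAeq, ?_⟩
  -- uniqueness
  intro B hB hBeq
  set d : ℝ → ℝ := fun t => B t - ((A₁ : Lp ℝ 1 μ) : ℝ → ℝ) t with hd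
  have hdint : Integrable d μ := hB.sub (L1.integrable_coeFn A₁)
  have key : ∀ᵐ y ∂μ, |d y| = |∫ t in Set.Ioi x, d t * F (t + y)| := by
    filter_upwards [hBeq, hAeq, (prod_int B hB).prod_left_ae,
      (prod_int _ (L1.integrable_coeFn A₁)).prod_left_ae] with y h1 h2 h3 h4
    have hsub : (∫ t in Set.Ioi x, d t * F (t + y)) =
        (∫ t in Set.Ioi x, B t * F (t + y)) -
          ∫ t in Set.Ioi x, ((A₁ : Lp ℝ 1 μ) : ℝ → ℝ) t * F (t + y) := by
      rw [← integral_sub h3 h4]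
      refine integral_congr_ae (Eventually.of_forall fun t => ?_)
      simp only [hd]; ring
    have hdy : d y = -(∫ t in Set.Ioi x, d t * F (t + y)) := by
      simp only [hd]; rw [hsub]; linarith
    rw [hdy, abs_neg]
  have hint_eq : (∫ t in Set.Ioi x, |d t|) =
      ∫ y in Set.Ioi x, |∫ t in Set.Ioi x, d t * F (t + y)| :=
    integral_congr_ae key
  have hle : (∫ t in Set.Ioi x, |d t|) ≤ k * ∫ t in Set.Ioi x, |d t| :=
    calc (∫ t in Set.Ioi x, |d t|)
        = ∫ y in Set.Ioi x, |∫ t in Set.Ioi x, d t * F (t + y)| := hint_eq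
      _ ≤ k * ∫ t in Set.Ioi x, |d t| := K_norm d hdint
  have hnn : 0 ≤ ∫ t in Set.Ioi x, |d t| := integral_nonneg fun t => abs_nonneg _
  have hz : (∫ t in Set.Ioi x, |d t|) = 0 := by nlinarith
  have hae : (fun t => |d t|) =ᵐ[μ] 0 := by
    rw [← integral_eq_zero_iff_of_nonneg (fun t => abs_nonneg (d t)) hdint.abs]
    exact hz
  filter_upwards [hae] with t ht
  have h0 : |d t| = 0 := ht
  have := abs_eq_zero.mp h0
  simpa [hd, sub_eq_zero] using this
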